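/- Suppose J ⊆ Π_{d=1}^D {1, …, N_d} is monotone lower. Then the family of product functions {q_α : α ∈ J} is orthonormal in L²_μ(I) and spans the same subspace of L²_μ(I) as {a_α : α ∈ J}; that is, {q_α : α ∈ J} is an L²_μ(I)-orthonormal basis of V = span{a_α : α ∈ J}. -/
import Mathlib


open MeasureTheory

private lemma span_aux {D : ℕ} {I : Fin D → Type*} {N : Fin D → ℕ}
    (f g : ∀ d, Fin (N d) → I d → ℝ)
    (C : ∀ d, Matrix (Fin (N d)) (Fin (N d)) ℝ)
    (hC : ∀ d (k j : Fin (N d)), j < k → C d k j = 0)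
    (hg : ∀ d j t, g d j t = ∑ k, C d k j * f d k t)
    (J : Set (∀ d, Fin (N d)))
    (hJ : ∀ α ∈ J, ∀ β : ∀ d, Fin (N d), (∀ d, β d ≤ α d) → β ∈ J)
    {α : ∀ d, Fin (N d)} (hα : α ∈ J) :
    (fun y : ∀ d, I d => ∏ d, g d (α d) (y d)) ∈
      Submodule.span ℝ
        {h : (∀ d, I d) → ℝ | ∃ β ∈ J, h = fun y => ∏ d, f d (β d) (y d)} := by
  have expand : (fun y : ∀ d, I d => ∏ d, g d (α d) (y d))
      = ∑ β ∈ Fintype.piFinset (fun d => (Finset.univ : Finset (Fin (N d)))),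
          (∏ d, C d (β d) (α d)) • (fun y : ∀ d, I d => ∏ d, f d (β d) (y d)) := by
    funext y
    simp only [Finset.sum_apply, Pi.smul_apply, smul_eq_mul]
    have : ∀ d, g d (α d) (y d) = ∑ k, C d k (α d) * f d k (y d) := fun d => hg d _ _
    rw [Finset.prod_congr rfl fun d _ => this d, Finset.prod_univ_sum]
    exact Finset.sum_congr rfl fun β _ => Finset.prod_mul_distrib
  rw [expand]
  refine Submodule.sum_mem _ fun β _ => ?_
  by_cases hβ : ∀ d, β d ≤ α d
  · exact Submodule.smul_mem _ _ (Submodule.subset_span ⟨β, hJ α hα β hβ, rfl⟩)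
  · push_neg at hβ
    obtain ⟨d, hd⟩ := hβ
    have hz : (∏ d, C d (β d) (α d)) = 0 :=
      Finset.prod_eq_zero (Finset.mem_univ d) (hC d _ _ hd)
    rw [hz, zero_smul]
    exact Submodule.zero_mem _

/-- If `J` is a monotone lower (downward closed) set of multi-indices,
the product functions `{q_α : α ∈ J}` form an `L²_μ(I)`-orthonormal basis of
`V = span{a_α : α ∈ J}`, where `a_j⁽ᵈ⁾ = Σ_k R⁽ᵈ⁾_{k,j} q_k⁽ᵈ⁾` with `R⁽ᵈ⁾` invertible
upper triangular: they are orthonormal and span the same subspace as `{a_α : α ∈ J}`. -/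
theorem stmt_14 (D : ℕ) (I : Fin D → Type*) [∀ d, MeasurableSpace (I d)]
    (μ : ∀ d, Measure (I d)) [∀ d, IsProbabilityMeasure (μ d)]
    (N : Fin D → ℕ) (q : ∀ d, Fin (N d) → I d → ℝ)
    (hq_meas : ∀ d j, Measurable (q d j))
    (hq_ortho : ∀ d j k,
      ∫ t, q d j t * q d k t ∂(μ d) = if j = k then (1 : ℝ) else 0)
    (R : ∀ d, Matrix (Fin (N d)) (Fin (N d)) ℝ)
    (hR_upper : ∀ d (k j : Fin (N d)), j < k → R d k j = 0)
    (hR_inv : ∀ d, IsUnit (R d).det)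
    (a : ∀ d, Fin (N d) → I d → ℝ)
    (ha : ∀ d j, a d j = fun t => ∑ k, R d k j * q d k t)
    (J : Set (∀ d, Fin (N d)))
    (hJ_lower : ∀ α ∈ J, ∀ β : ∀ d, Fin (N d), (∀ d, β d ≤ α d) → β ∈ J) :
    (∀ α ∈ J, ∀ β ∈ J,
      ∫ y, (∏ d, q d (α d) (y d)) * (∏ d, q d (β d) (y d)) ∂(Measure.pi μ)
        = if α = β then (1 : ℝ) else 0) ∧
    Submodule.span ℝ {f : (∀ d, I d) → ℝ | ∃ α ∈ J, f = fun y => ∏ d, a d (α d) (y d)}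
      = Submodule.span ℝ
        {f : (∀ d, I d) → ℝ | ∃ α ∈ J, f = fun y => ∏ d, q d (α d) (y d)} := by
  constructor
  · intro α hα β hβ
    letI : ∀ d, MeasureSpace (I d) := fun d => ⟨μ d⟩
    have hpi : Measure.pi μ = (volume : Measure (∀ d, I d)) := by
      rw [volume_pi]; rfl
    rw [hpi]
    calc ∫ y : ∀ d, I d, (∏ d, q d (α d) (y d)) * ∏ d, q d (β d) (y d)
        = ∫ y : ∀ d, I d, ∏ d, (q d (α d) (y d) * q d (β d) (y d)) := by
          simp_rw [Finset.prod_mul_distrib]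
      _ = ∏ d, ∫ t, q d (α d) t * q d (β d) t :=
          integral_fin_nat_prod_eq_prod fun d t => q d (α d) t * q d (β d) t
      _ = ∏ d, if α d = β d then (1 : ℝ) else 0 := by
          exact Finset.prod_congr rfl fun d _ => hq_ortho d (α d) (β d)
      _ = if α = β then (1 : ℝ) else 0 := by
          by_cases h : α = β
          · simp [h]
          · rw [if_neg h]
            obtain ⟨d, hd⟩ := Function.ne_iff.mp h
            exact Finset.prod_eq_zero (Finset.mem_univ d) (if_neg hd)
  · apply le_antisymm
    · rw [Submodule.span_le]
      rintro f ⟨α, hα, rfl⟩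
      exact span_aux q a R hR_upper (fun d j t => by rw [ha d j]) J hJ_lower hα
    · rw [Submodule.span_le]
      rintro f ⟨α, hα, rfl⟩
      refine span_aux a q (fun d => (R d)⁻¹) ?_ ?_ J hJ_lower hα
      · intro d k j hjk
        haveI := (R d).invertibleOfIsUnitDet (hR_inv d)
        exact Matrix.blockTriangular_inv_of_blockTriangular
          (b := id) (fun i j h => hR_upper d i j h) hjk
      · intro d j t
        have hRS : R d * (R d)⁻¹ = 1 := Matrix.mul_nonsing_inv (R d) (hR_inv d)
        calc q d j t = ∑ m, (1 : Matrix (Fin (N d)) (Fin (N d)) ℝ) m j * q d m t := by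
              simp [Matrix.one_apply, Finset.sum_ite_eq, eq_comm]
          _ = ∑ m, (∑ k, R d m k * (R d)⁻¹ k j) * q d m t := by
              simp_rw [← hRS, Matrix.mul_apply]
          _ = ∑ k, (R d)⁻¹ k j * a d k t := by
              simp_rw [ha, Finset.sum_mul, Finset.mul_sum]
              rw [Finset.sum_comm]
              congr 1; funext k; congr 1; funext m; ring
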